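/- Let k be an integer, let a, ε be real, and let v be a unit eigenvector of the Harper matrix h(a, kπ/N, ε) whose eigenvalue λ is simple (its eigenspace is one-dimensional). Then the Hellmann–Feynman expectation value of the b-derivative of the Harper matrix vanishes: the inner product ⟨v, D·v⟩ = 0, where D = (a/(2i))·(exp(−ikπ/N)·Xᴴ − exp(ikπ/N)·X) is the derivative of h(a, b, ε) with respect to b evaluated at b = kπ/N. -/

import Mathlib

open Matrix Complex

/-- The primitive `N`-th root of unity `ω = exp(2πi/N)`. -/
noncomputable def omegaN (N : ℕ) : ℂ := Complex.exp (2 * (Real.pi : ℂ) * Complex.I / (N : ℂ))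

/-- The clock matrix `Z` with `Z_{jk} = ω^j` if `j = k`, `0` otherwise. -/
noncomputable def clockZ (N : ℕ) : Matrix (Fin N) (Fin N) ℂ :=
  Matrix.diagonal fun j => omegaN N ^ (j : ℕ)

/-- The shift matrix `X` with `X_{jk} = 1` if `j = k + 1 (mod N)`, `0` otherwise. -/
def shiftX (N : ℕ) : Matrix (Fin N) (Fin N) ℂ :=
  Matrix.of fun j k => if (j : ℕ) = ((k : ℕ) + 1) % N then 1 else 0

/-- The shifted Harper matrix
`h(a,b,ε) = (a/2)·e^{ib}·X + (a/2)·e^{−ib}·Xᴴ + (ε/2)·(Z + Zᴴ)`. -/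
noncomputable def harper (N : ℕ) (a b ε : ℝ) : Matrix (Fin N) (Fin N) ℂ :=
  ((a : ℂ) / 2 * Complex.exp ((b : ℂ) * Complex.I)) • shiftX N
  + ((a : ℂ) / 2 * Complex.exp (-(b : ℂ) * Complex.I)) • (shiftX N)ᴴ
  + ((ε : ℂ) / 2) • (clockZ N + (clockZ N)ᴴ)

/-- The parity matrix `P` with `P_{jk} = 1` if `j + k ≡ 0 (mod N)`, `0` otherwise. -/
def parityP (N : ℕ) : Matrix (Fin N) (Fin N) ℂ :=
  Matrix.of fun j k => if ((j : ℕ) + (k : ℕ)) % N = 0 then 1 else 0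

/-- The discrete Fourier transform matrix `Q` with `Q_{jk} = ω^{jk}/√N`. -/
noncomputable def dftQ (N : ℕ) : Matrix (Fin N) (Fin N) ℂ :=
  Matrix.of fun j k => omegaN N ^ ((j : ℕ) * (k : ℕ)) / (Real.sqrt N : ℂ)

private lemma pow_mod_eq' {φ : ℂ} {N : ℕ} (h : φ ^ N = 1) (m : ℕ) :
    φ ^ (m % N) = φ ^ m := by
  conv_rhs => rw [← Nat.div_add_mod m N]
  rw [pow_add, pow_mul, h, one_pow, one_mul]

private lemma pow_adj' {φ : ℂ} {N : ℕ} (h : φ ^ N = 1) {j l : Fin N}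
    (hjl : (j : ℕ) = ((l : ℕ) + 1) % N) : φ ^ (j : ℕ) = φ * φ ^ (l : ℕ) := by
  rw [hjl, pow_mod_eq' h, pow_succ]; ring

private lemma no_self_succ' {N : ℕ} (hN : 2 ≤ N) (j : Fin N) :
    ¬ ((j : ℕ) = ((j : ℕ) + 1) % N) := by
  intro h
  have hj := j.isLt
  rcases Nat.lt_or_ge ((j : ℕ) + 1) N with h1 | h1
  · rw [Nat.mod_eq_of_lt h1] at h; omega
  · have h2 : (j : ℕ) + 1 = N := by omega
    rw [h2, Nat.mod_self] at h
    omega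

private lemma star_ite01 (p : Prop) [Decidable p] :
    star (if p then (1 : ℂ) else 0) = if p then 1 else 0 := by
  split_ifs <;> simp

private lemma harper_apply' (N : ℕ) (a b ε : ℝ) (j l : Fin N) : harper N a b ε j l =
    (a : ℂ) / 2 * Complex.exp ((b : ℂ) * Complex.I) *
      (if (j : ℕ) = ((l : ℕ) + 1) % N then 1 else 0)
    + (a : ℂ) / 2 * Complex.exp (-(b : ℂ) * Complex.I) *
      (if (l : ℕ) = ((j : ℕ) + 1) % N then 1 else 0)
    + (if j = l then (ε : ℂ) / 2 * (omegaN N ^ (j : ℕ) + star (omegaN N ^ (j : ℕ))) else 0) := by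
  rcases eq_or_ne j l with rfl | hjl
  · simp [harper, shiftX, clockZ, Matrix.add_apply, Matrix.smul_apply,
      Matrix.conjTranspose_apply, Matrix.diagonal_apply, Matrix.of_apply]
  · simp [harper, shiftX, clockZ, Matrix.add_apply, Matrix.smul_apply,
      Matrix.conjTranspose_apply, Matrix.diagonal_apply, Matrix.of_apply, hjl, hjl.symm,
      apply_ite (starRingEnd ℂ)]

private lemma dmat_apply' (N : ℕ) (a b : ℝ) (j l : Fin N) :
    ((((a : ℂ) / (2 * Complex.I)) •
        (Complex.exp (-(b : ℂ) * Complex.I) • (shiftX N)ᴴ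
          - Complex.exp ((b : ℂ) * Complex.I) • shiftX N)) : Matrix (Fin N) (Fin N) ℂ) j l =
    (a : ℂ) / (2 * Complex.I) * Complex.exp (-(b : ℂ) * Complex.I) *
      (if (l : ℕ) = ((j : ℕ) + 1) % N then 1 else 0)
    - (a : ℂ) / (2 * Complex.I) * Complex.exp ((b : ℂ) * Complex.I) *
      (if (j : ℕ) = ((l : ℕ) + 1) % N then 1 else 0) := by
  simp [shiftX, Matrix.sub_apply, Matrix.smul_apply, Matrix.conjTranspose_apply,
    Matrix.of_apply, apply_ite (starRingEnd ℂ)]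
  split_ifs <;> ring

theorem harper_hellmann_feynman (N : ℕ) (hN : 2 ≤ N) (k : ℤ) (a ε : ℝ)
    (v : Fin N → ℂ) (lam : ℂ)
    (hunit : dotProduct (star v) v = 1)
    (heig : (harper N a ((k : ℝ) * Real.pi / N) ε).mulVec v = lam • v)
    (hsimple : ∀ w : Fin N → ℂ,
      (harper N a ((k : ℝ) * Real.pi / N) ε).mulVec w = lam • w → ∃ c : ℂ, w = c • v) :
    dotProduct (star v)
      (((((a : ℂ) / (2 * Complex.I)) •
          (Complex.exp (-(((k : ℝ) * Real.pi / N : ℝ) : ℂ) * Complex.I) • (shiftX N)ᴴ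
            - Complex.exp ((((k : ℝ) * Real.pi / N : ℝ) : ℂ) * Complex.I) • shiftX N))).mulVec v)
      = 0 := by
  have hN0 : (N : ℂ) ≠ 0 := Nat.cast_ne_zero.mpr (by omega)
  set b : ℝ := (k : ℝ) * Real.pi / N with hb
  set φ : ℂ := Complex.exp (2 * (k : ℂ) * Real.pi * Complex.I / N) with hφ
  -- scalar facts
  have hφN : φ ^ N = 1 := by
    rw [hφ, ← Complex.exp_nat_mul]
    have h2 : (N : ℂ) * (2 * (k : ℂ) * Real.pi * Complex.I / N)
        = (k : ℂ) * (2 * Real.pi * Complex.I) := by field_simp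
    rw [h2, Complex.exp_int_mul_two_pi_mul_I]
  have hconj : star φ * φ = 1 := by
    show (starRingEnd ℂ) φ * φ = 1
    rw [hφ, ← Complex.exp_conj, ← Complex.exp_add]
    have h3 : (starRingEnd ℂ) (2 * (k : ℂ) * Real.pi * Complex.I / N)
        + 2 * (k : ℂ) * Real.pi * Complex.I / N = 0 := by
      simp [map_div₀, _root_.map_mul, Complex.conj_I, map_ofNat]
      ring
    rw [h3, Complex.exp_zero]
  have hexp : Complex.exp ((b : ℂ) * Complex.I) = φ * Complex.exp (-(b : ℂ) * Complex.I) := by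
    rw [hφ, ← Complex.exp_add]
    congr 1
    have hbc : ((b : ℝ) : ℂ) = (k : ℂ) * Real.pi / N := by
      rw [hb]; push_cast; ring
    rw [hbc]; ring
  -- the symmetry matrix
  set U : Matrix (Fin N) (Fin N) ℂ := Matrix.diagonal (fun j : Fin N => φ ^ (j : ℕ)) with hU
  have hUU : Uᴴ * U = 1 := by
    rw [hU, Matrix.diagonal_conjTranspose, Matrix.diagonal_mul_diagonal]
    have hfun : (fun i : Fin N => (star fun j : Fin N => φ ^ (j : ℕ)) i * φ ^ (i : ℕ))
        = fun _ => (1 : ℂ) := by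
      funext i
      simp only [Pi.star_apply, star_pow]
      rw [← mul_pow, hconj, one_pow]
    rw [hfun, Matrix.diagonal_one]
  -- Hermiticity
  have hstar1 : (starRingEnd ℂ) ((a : ℂ) / 2 * Complex.exp ((b : ℂ) * Complex.I))
      = (a : ℂ) / 2 * Complex.exp (-(b : ℂ) * Complex.I) := by
    rw [_root_.map_mul, map_div₀, Complex.conj_ofReal, map_ofNat, ← Complex.exp_conj]
    congr 2
    rw [_root_.map_mul, Complex.conj_ofReal, Complex.conj_I]
    ring
  have hstar2 : (starRingEnd ℂ) ((a : ℂ) / 2 * Complex.exp (-(b : ℂ) * Complex.I))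
      = (a : ℂ) / 2 * Complex.exp ((b : ℂ) * Complex.I) := by
    rw [_root_.map_mul, map_div₀, Complex.conj_ofReal, map_ofNat, ← Complex.exp_conj]
    congr 2
    rw [_root_.map_mul, map_neg, Complex.conj_ofReal, Complex.conj_I]
    ring
  have hstareps : star ((ε : ℂ) / 2) = (ε : ℂ) / 2 := by
    rw [Complex.star_def, map_div₀, Complex.conj_ofReal, map_ofNat]
  have hstara : star ((a : ℂ) / 2) = (a : ℂ) / 2 := by
    rw [Complex.star_def, map_div₀, Complex.conj_ofReal, map_ofNat]
  have hstarexp1 : star (Complex.exp ((b : ℂ) * Complex.I)) = Complex.exp (-(b : ℂ) * Complex.I) := by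
    rw [Complex.star_def, ← Complex.exp_conj]
    congr 1
    rw [_root_.map_mul, Complex.conj_ofReal, Complex.conj_I]
    ring
  have hstarexp2 : star (Complex.exp (-(b : ℂ) * Complex.I)) = Complex.exp ((b : ℂ) * Complex.I) := by
    rw [Complex.star_def, ← Complex.exp_conj]
    congr 1
    rw [_root_.map_mul, map_neg, Complex.conj_ofReal, Complex.conj_I]
    ring
  have H1 : (harper N a b ε)ᴴ = harper N a b ε := by
    ext j l
    rw [Matrix.conjTranspose_apply, harper_apply', harper_apply']
    rcases eq_or_ne j l with rfl | hjl
    · have hP := no_self_succ' hN j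
      rw [if_neg hP, if_pos rfl]
      simp only [mul_zero, zero_add, add_zero, star_add, star_mul', star_star, hstareps]
      ring
    · rw [if_neg hjl, if_neg (Ne.symm hjl), add_zero, add_zero]
      simp only [star_add, star_mul', star_ite01, hstara, hstarexp1, hstarexp2]
      ring
  -- key coefficient relations
  have hC : (a : ℂ) / 2 * Complex.exp ((b : ℂ) * Complex.I)
      = φ * ((a : ℂ) / 2 * Complex.exp (-(b : ℂ) * Complex.I)) := by rw [hexp]; ring
  have hC2 : (a : ℂ) / (2 * Complex.I) * Complex.exp ((b : ℂ) * Complex.I)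
      = φ * ((a : ℂ) / (2 * Complex.I) * Complex.exp (-(b : ℂ) * Complex.I)) := by
    rw [hexp]; ring
  -- intertwining of harper
  have H2 : harper N a b ε * U = U * (harper N a b ε)ᵀ := by
    ext j l
    rw [Matrix.mul_diagonal, Matrix.diagonal_mul, Matrix.transpose_apply,
      harper_apply', harper_apply']
    by_cases hP : (j : ℕ) = ((l : ℕ) + 1) % N <;>
      by_cases hQ : (l : ℕ) = ((j : ℕ) + 1) % N <;>
      rcases eq_or_ne j l with hR | hR
    · rw [hR] at hP; exact absurd hP (no_self_succ' hN l)
    · have hadP := pow_adj' hφN hP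
      have hadQ := pow_adj' hφN hQ
      rw [if_pos hP, if_pos hQ, if_neg hR, if_neg (Ne.symm hR)]
      linear_combination ((a : ℂ) / 2 * Complex.exp (-(b : ℂ) * Complex.I)) * hadQ
        - ((a : ℂ) / 2 * Complex.exp (-(b : ℂ) * Complex.I)) * hadP
        + (φ ^ (l : ℕ) - φ ^ (j : ℕ)) * hC
    · rw [hR] at hP; exact absurd hP (no_self_succ' hN l)
    · have hadP := pow_adj' hφN hP
      rw [if_pos hP, if_neg hQ, if_neg hR, if_neg (Ne.symm hR)]
      linear_combination φ ^ (l : ℕ) * hC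
        - ((a : ℂ) / 2 * Complex.exp (-(b : ℂ) * Complex.I)) * hadP
    · rw [← hR] at hQ; exact absurd hQ (no_self_succ' hN j)
    · have hadQ := pow_adj' hφN hQ
      rw [if_neg hP, if_pos hQ, if_neg hR, if_neg (Ne.symm hR)]
      linear_combination (-(φ ^ (j : ℕ))) * hC
        + ((a : ℂ) / 2 * Complex.exp (-(b : ℂ) * Complex.I)) * hadQ
    · subst hR
      rw [if_neg hP, if_pos rfl]
      ring
    · rw [if_neg hP, if_neg hQ, if_neg hR, if_neg (Ne.symm hR)]
      ring
  -- the derivative matrix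
  set Dm : Matrix (Fin N) (Fin N) ℂ :=
    ((a : ℂ) / (2 * Complex.I)) •
      (Complex.exp (-(b : ℂ) * Complex.I) • (shiftX N)ᴴ
        - Complex.exp ((b : ℂ) * Complex.I) • shiftX N) with hDm
  -- intertwining of the derivative (with a sign flip)
  have H3 : Dm * U = -(U * Dmᵀ) := by
    ext j l
    rw [Matrix.mul_diagonal, Matrix.neg_apply, Matrix.diagonal_mul, Matrix.transpose_apply,
      hDm, dmat_apply', dmat_apply']
    by_cases hP : (j : ℕ) = ((l : ℕ) + 1) % N <;>
      by_cases hQ : (l : ℕ) = ((j : ℕ) + 1) % N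
    · have hadP := pow_adj' hφN hP
      have hadQ := pow_adj' hφN hQ
      rw [if_pos hP, if_pos hQ]
      linear_combination (-(φ ^ (l : ℕ))) * hC2 - φ ^ (j : ℕ) * hC2
        + ((a : ℂ) / (2 * Complex.I) * Complex.exp (-(b : ℂ) * Complex.I)) * hadP
        + ((a : ℂ) / (2 * Complex.I) * Complex.exp (-(b : ℂ) * Complex.I)) * hadQ
    · have hadP := pow_adj' hφN hP
      rw [if_pos hP, if_neg hQ]
      linear_combination (-(φ ^ (l : ℕ))) * hC2
        + ((a : ℂ) / (2 * Complex.I) * Complex.exp (-(b : ℂ) * Complex.I)) * hadP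
    · have hadQ := pow_adj' hφN hQ
      rw [if_neg hP, if_pos hQ]
      linear_combination ((a : ℂ) / (2 * Complex.I) * Complex.exp (-(b : ℂ) * Complex.I)) * hadQ
        - φ ^ (j : ℕ) * hC2
    · rw [if_neg hP, if_neg hQ]
      ring
  -- lam is real
  have hlamval : star v ⬝ᵥ (harper N a b ε *ᵥ v) = lam := by
    rw [heig, dotProduct_smul, hunit, smul_eq_mul, mul_one]
  have hlam : star lam = lam := by
    conv_lhs => rw [← hlamval]
    rw [← Matrix.star_dotProduct, Matrix.star_mulVec, H1, ← Matrix.dotProduct_mulVec, hlamval]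
  -- the twisted eigenvector
  set w : Fin N → ℂ := U *ᵥ (star v) with hw
  have hstarv : star v ᵥ* harper N a b ε = lam • star v := by
    have h4 := congrArg star heig
    rw [Matrix.star_mulVec, H1, star_smul, hlam] at h4
    exact h4
  have hweig : harper N a b ε *ᵥ w = lam • w := by
    rw [hw, Matrix.mulVec_mulVec, H2, ← Matrix.mulVec_mulVec, Matrix.mulVec_transpose,
      hstarv, Matrix.mulVec_smul]
  obtain ⟨c, hc⟩ := hsimple w hweig
  have hwnorm : star w ⬝ᵥ w = 1 := by
    rw [hw, Matrix.star_mulVec, star_star, Matrix.dotProduct_mulVec, Matrix.vecMul_vecMul,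
      hUU, Matrix.vecMul_one, dotProduct_comm, hunit]
  have hcnorm : star c * c = 1 := by
    rw [hc, star_smul, smul_dotProduct, dotProduct_smul, hunit] at hwnorm
    simpa [smul_eq_mul] using hwnorm
  -- the expectation value
  set E : ℂ := star v ⬝ᵥ (Dm *ᵥ v) with hE
  have hE1 : star w ⬝ᵥ (Dm *ᵥ w) = E := by
    rw [hc, star_smul, Matrix.mulVec_smul, smul_dotProduct, dotProduct_smul,
      ← hE, smul_eq_mul, smul_eq_mul, ← mul_assoc, hcnorm, one_mul]
  have hE2 : star w ⬝ᵥ (Dm *ᵥ w) = -E := by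
    rw [hw, Matrix.star_mulVec, star_star, Matrix.mulVec_mulVec, H3, Matrix.neg_mulVec,
      dotProduct_neg, ← Matrix.mulVec_mulVec, Matrix.dotProduct_mulVec,
      Matrix.vecMul_vecMul, hUU, Matrix.vecMul_one, Matrix.mulVec_transpose,
      dotProduct_comm, ← Matrix.dotProduct_mulVec, hE]
  have hEE : E = -E := hE1.symm.trans hE2
  have hE0 : E = 0 := by linear_combination hEE / 2
  exact hE0
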